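/- Let X be a real vector space, p₁, …, p_N : X → ℝ polyhedral sublinear functionals, and p : X → ℝ sublinear. If {x : p x ≥ 0} ⊇ ⋂_{k=1}^N {x : p_k x ≤ 0}, then there exist α₁, …, α_N ≥ 0 such that p(x) + ∑_{k=1}^N α_k p_k(x) ≥ 0 for all x ∈ X. -/

import Mathlib

/-- A functional is sublinear if it is subadditive and positively homogeneous. -/
def IsSublinear {X : Type*} [AddCommGroup X] [Module ℝ X] (p : X → ℝ) : Prop :=
  (∀ x y : X, p (x + y) ≤ p x + p y) ∧ ∀ (t : ℝ), 0 ≤ t → ∀ x : X, p (t • x) = t * p x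

/-- A functional is polyhedral if it is the maximum of finitely many linear functionals. -/
def IsPolyhedral {X : Type*} [AddCommGroup X] [Module ℝ X] (p : X → ℝ) : Prop :=
  ∃ (m : ℕ) (L : Fin (m + 1) → (X →ₗ[ℝ] ℝ)), ∀ x : X, p x = ⨆ i, L i x

section helpers
variable {X : Type*} [AddCommGroup X] [Module ℝ X]

lemma sublinear_add_sum {p : X → ℝ} (hp : IsSublinear p) {n : ℕ}
    (c : Fin n → ℝ) (L : Fin n → X →ₗ[ℝ] ℝ) :
    IsSublinear (fun x => p x + ∑ i, c i * L i x) := by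
  constructor
  · intro x y
    have := hp.1 x y
    simp only [map_add]
    have hs : ∑ i, c i * (L i x + L i y) = (∑ i, c i * L i x) + ∑ i, c i * L i y := by
      rw [← Finset.sum_add_distrib]; apply Finset.sum_congr rfl; intros; ring
    rw [hs]; linarith
  · intro t ht x
    simp only [map_smul, smul_eq_mul, hp.2 t ht x, Finset.mul_sum]
    rw [mul_add, Finset.mul_sum]
    congr 1
    apply Finset.sum_congr rfl; intros; ring

lemma lemA1 {q : X → ℝ} (hq : IsSublinear q) (M : X →ₗ[ℝ] ℝ)
    (h : ∀ x, M x = 0 → 0 ≤ q x) :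
    ∃ c : ℝ, ∀ x, 0 ≤ q x + c * M x := by
  by_cases h0 : ∀ x, M x = 0
  · exact ⟨0, fun x => by simpa using h x (h0 x)⟩
  push_neg at h0
  obtain ⟨e, he⟩ := h0
  set e' : X := (M e)⁻¹ • e with he'def
  have hMe' : M e' = 1 := by
    simp [he'def, map_smul, inv_mul_cancel₀ he]
  set S : Set ℝ := {r | ∃ u, M u = 1 ∧ r = -q u} with hS
  have hne : S.Nonempty := ⟨-q e', e', hMe', rfl⟩
  have key : ∀ u v, M u = 1 → M v = -1 → -q u ≤ q v := by
    intro u v hu hv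
    have h1 : M (u + v) = 0 := by rw [map_add, hu, hv]; ring
    have h2 := h _ h1
    have h3 := hq.1 u v
    linarith
  have hMne' : M (-e') = -1 := by rw [map_neg, hMe']
  have hbdd : BddAbove S := by
    refine ⟨q (-e'), ?_⟩
    rintro r ⟨u, hu, rfl⟩
    exact key u (-e') hu hMne'
  refine ⟨sSup S, fun x => ?_⟩
  rcases lt_trichotomy (M x) 0 with hs | hs | hs
  · -- M x < 0
    set v : X := (-(M x))⁻¹ • x with hv
    have hMv : M v = -1 := by
      rw [hv, map_smul, smul_eq_mul]
      field_simp
      rw [div_self hs.ne]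
    have hxv : x = (-(M x)) • v := by
      rw [hv, smul_smul, mul_inv_cancel₀ (by linarith), one_smul]
    have hqx : q x = (-(M x)) * q v := by
      conv_lhs => rw [hxv]
      exact hq.2 _ (by linarith) v
    have hsup : sSup S ≤ q v := by
      apply csSup_le hne
      rintro r ⟨u, hu, rfl⟩
      exact key u v hu hMv
    nlinarith
  · simp only [hs, mul_zero, add_zero]
    exact h x hs
  · -- M x > 0
    set u : X := (M x)⁻¹ • x with hu
    have hMu : M u = 1 := by
      rw [hu, map_smul, smul_eq_mul, inv_mul_cancel₀ (ne_of_gt hs)]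
    have hxu : x = (M x) • u := by
      rw [hu, smul_smul, mul_inv_cancel₀ (ne_of_gt hs), one_smul]
    have hqx : q x = (M x) * q u := by
      conv_lhs => rw [hxu]
      exact hq.2 _ (le_of_lt hs) u
    have hsup : -q u ≤ sSup S := le_csSup hbdd ⟨u, hMu, rfl⟩
    nlinarith
end helpers

lemma lemA (r : ℕ) : ∀ (X : Type*) [AddCommGroup X] [Module ℝ X] (q : X → ℝ)
    (M : Fin r → X →ₗ[ℝ] ℝ), IsSublinear q → (∀ x, (∀ i, M i x = 0) → 0 ≤ q x) →
    ∃ c : Fin r → ℝ, ∀ x, 0 ≤ q x + ∑ i, c i * M i x := by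
  induction r with
  | zero =>
    intro X _ _ q M hq h
    exact ⟨fun _ => 0, fun x => by simpa using h x (fun i => i.elim0)⟩
  | succ r ih =>
    intro X _ _ q M hq h
    set Y := LinearMap.ker (M 0) with hY
    have hqY : IsSublinear (fun y : Y => q y) := by
      constructor
      · intro a b; simpa using hq.1 a.val b.val
      · intro t ht a; simpa using hq.2 t ht a.val
    have hypY : ∀ y : Y, (∀ i : Fin r, ((M i.succ).comp Y.subtype) y = 0) → 0 ≤ q y := by
      intro y hy
      apply h y.val
      intro i
      refine Fin.cases ?_ ?_ i
      · exact y.2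
      · intro j; exact hy j
    obtain ⟨c', hc'⟩ := ih Y (fun y => q y) (fun i => (M i.succ).comp Y.subtype) hqY hypY
    have hq2 : IsSublinear (fun x => q x + ∑ i : Fin r, c' i * M i.succ x) :=
      sublinear_add_sum hq c' (fun i => M i.succ)
    have h2 : ∀ x, M 0 x = 0 → 0 ≤ q x + ∑ i : Fin r, c' i * M i.succ x := by
      intro x hx
      exact hc' ⟨x, (LinearMap.mem_ker).2 hx⟩
    obtain ⟨c0, hc0⟩ := lemA1 hq2 (M 0) h2
    refine ⟨Fin.cases c0 c', fun x => ?_⟩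
    rw [Fin.sum_univ_succ]
    have := hc0 x
    simp only [Fin.cases_zero, Fin.cases_succ]
    linarith

lemma sublinear_restrict {X : Type*} [AddCommGroup X] [Module ℝ X] {p : X → ℝ}
    (hp : IsSublinear p) (Y : Submodule ℝ X) : IsSublinear (fun y : Y => p y) := by
  constructor
  · intro a b; simpa using hp.1 a.val b.val
  · intro t ht a; simpa using hp.2 t ht a.val

lemma sublinear_add_one {X : Type*} [AddCommGroup X] [Module ℝ X] {p : X → ℝ}
    (hp : IsSublinear p) (c : ℝ) (M : X →ₗ[ℝ] ℝ) :
    IsSublinear (fun x => p x + c * M x) := by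
  constructor
  · intro a b; have := hp.1 a b; simp only [map_add]; nlinarith
  · intro t ht a; simp only [map_smul, smul_eq_mul, hp.2 t ht a]; ring

set_option maxHeartbeats 1600000 in
lemma lemB (m : ℕ) : ∀ (X : Type*) [AddCommGroup X] [Module ℝ X] (p : X → ℝ)
    (L : Fin m → X →ₗ[ℝ] ℝ), IsSublinear p → (∀ x, (∀ i, L i x ≤ 0) → 0 ≤ p x) →
    ∃ β : Fin m → ℝ, (∀ i, 0 ≤ β i) ∧ ∀ x, 0 ≤ p x + ∑ i, β i * L i x := by
  induction m with
  | zero =>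
    intro X _ _ p L hp h
    exact ⟨fun _ => 0, fun i => le_refl 0, fun x => by simpa using h x (fun i => i.elim0)⟩
  | succ m ih =>
    intro X _ _ p L hp h
    set M := L 0 with hM
    set L' : Fin m → X →ₗ[ℝ] ℝ := fun i => L i.succ with hL'
    have hfeas : ∀ x, (∀ i, L' i x ≤ 0) → M x ≤ 0 → 0 ≤ p x := by
      intro x hx hMx
      apply h x
      intro i
      refine Fin.cases ?_ ?_ i
      · exact hMx
      · exact hx
    by_cases hcase : ∃ e, (∀ i, L' i e ≤ 0) ∧ M e < 0
    · -- Case 1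
      obtain ⟨e, hel, hem⟩ := hcase
      set e' : X := (-(M e))⁻¹ • e with he'
      have hinv : (0:ℝ) ≤ (-(M e))⁻¹ := inv_nonneg.mpr (by linarith)
      have hMe' : M e' = -1 := by
        rw [he', map_smul, smul_eq_mul]
        field_simp
        rw [div_self hem.ne]
      have hele' : ∀ i, L' i e' ≤ 0 := by
        intro i
        rw [he', map_smul, smul_eq_mul]
        exact mul_nonpos_of_nonneg_of_nonpos hinv (hel i)
      set S : Set ℝ := {r | ∃ u, (∀ i, L' i u ≤ 0) ∧ M u = 1 ∧ r = -p u} with hS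
      have key : ∀ u v, (∀ i, L' i u ≤ 0) → M u = 1 → (∀ i, L' i v ≤ 0) → M v = -1 →
          -p u ≤ p v := by
        intro u v hu hMu hv hMv
        have h1 : ∀ i, L' i (u + v) ≤ 0 := by
          intro i; rw [map_add]; linarith [hu i, hv i]
        have h2 : M (u + v) ≤ 0 := by rw [map_add, hMu, hMv]; norm_num
        have h3 := hfeas _ h1 h2
        have h4 := hp.1 u v
        linarith
      have hbdd : BddAbove S := by
        refine ⟨p e', ?_⟩
        rintro r ⟨u, hu, hMu, rfl⟩
        exact key u e' hu hMu hele' hMe'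
      set α : ℝ := max 0 (sSup S) with hα
      have hα0 : 0 ≤ α := le_max_left _ _
      have hclaim : ∀ x, (∀ i, L' i x ≤ 0) → 0 ≤ p x + α * M x := by
        intro x hx
        rcases lt_trichotomy (M x) 0 with hs | hs | hs
        · set v : X := (-(M x))⁻¹ • x with hv
          have hinvx : (0:ℝ) ≤ (-(M x))⁻¹ := inv_nonneg.mpr (by linarith)
          have hMv : M v = -1 := by
            rw [hv, map_smul, smul_eq_mul]; field_simp; rw [div_self hs.ne]
          have hvle : ∀ i, L' i v ≤ 0 := fun i => by
            rw [hv, map_smul, smul_eq_mul]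
            exact mul_nonpos_of_nonneg_of_nonpos hinvx (hx i)
          have hpv : 0 ≤ p v := hfeas v hvle (by rw [hMv]; norm_num)
          have hxv : x = (-(M x)) • v := by
            rw [hv, smul_smul, mul_inv_cancel₀ (by linarith), one_smul]
          have hqx : p x = (-(M x)) * p v := by
            conv_lhs => rw [hxv]
            exact hp.2 _ (by linarith) v
          have hsup : sSup S ≤ p v := by
            apply Real.sSup_le ?_ hpv
            rintro r ⟨u, hu, hMu, rfl⟩
            exact key u v hu hMu hvle hMv
          have hαv : α ≤ p v := max_le hpv hsup
          nlinarith
        · rw [hs, mul_zero, add_zero]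
          exact hfeas x hx (le_of_eq hs)
        · set u : X := (M x)⁻¹ • x with hu
          have hinvx : (0:ℝ) ≤ (M x)⁻¹ := inv_nonneg.mpr (le_of_lt hs)
          have hMu : M u = 1 := by
            rw [hu, map_smul, smul_eq_mul, inv_mul_cancel₀ (ne_of_gt hs)]
          have hule : ∀ i, L' i u ≤ 0 := fun i => by
            rw [hu, map_smul, smul_eq_mul]
            exact mul_nonpos_of_nonneg_of_nonpos hinvx (hx i)
          have hxu : x = (M x) • u := by
            rw [hu, smul_smul, mul_inv_cancel₀ (ne_of_gt hs), one_smul]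
          have hqx : p x = (M x) * p u := by
            conv_lhs => rw [hxu]
            exact hp.2 _ (le_of_lt hs) u
          have hsup : -p u ≤ sSup S := le_csSup hbdd ⟨u, hule, hMu, rfl⟩
          have hαu : -p u ≤ α := le_trans hsup (le_max_right _ _)
          nlinarith
      obtain ⟨β', hβ'0, hβ'⟩ := ih X (fun x => p x + α * M x) L'
        (sublinear_add_one hp α M) hclaim
      refine ⟨Fin.cases α β', ?_, ?_⟩
      · intro i
        refine Fin.cases ?_ ?_ i
        · exact hα0
        · exact hβ'0
      · intro x
        rw [Fin.sum_univ_succ]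
        have := hβ' x
        simp only [Fin.cases_zero, Fin.cases_succ]
        linarith
    · -- Case 2
      push_neg at hcase
      have hMsub : IsSublinear (fun x => M x) := by
        constructor
        · intro a b; simp [map_add]
        · intro t ht a; simp [map_smul]
      obtain ⟨δ, hδ0, hδ⟩ := ih X (fun x => M x) L' hMsub hcase
      have hzero : ∀ x, M x + ∑ i, δ i * L' i x = 0 := by
        intro x
        have h1 := hδ x
        have h2 := hδ (-x)
        have hneg : ∑ i, δ i * L' i (-x) = -∑ i, δ i * L' i x := by
          rw [← Finset.sum_neg_distrib]
          apply Finset.sum_congr rfl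
          intros; rw [map_neg]; ring
        rw [map_neg, hneg] at h2
        linarith
      set Y : Submodule ℝ X := ⨅ i : Fin m, LinearMap.ker (δ i • L' i) with hYdef
      have memY : ∀ x : X, x ∈ Y ↔ ∀ i, δ i * L' i x = 0 := by
        intro x
        simp only [hYdef, Submodule.mem_iInf, LinearMap.mem_ker, LinearMap.smul_apply,
          smul_eq_mul]
      have hypY : ∀ y : Y, (∀ i, ((L' i).comp Y.subtype) y ≤ 0) → 0 ≤ p y.val := by
        intro y hy
        have hMy : M y.val = 0 := by
          have h1 := hzero y.val
          have h2 : ∑ i, δ i * L' i y.val = 0 :=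
            Finset.sum_eq_zero (fun i _ => ((memY y.val).1 y.2) i)
          linarith
        exact hfeas y.val (fun i => hy i) (le_of_eq hMy)
      obtain ⟨β, hβ0, hβ⟩ := ih Y (fun y => p y) (fun i => (L' i).comp Y.subtype)
        (sublinear_restrict hp Y) hypY
      have hqsub : IsSublinear (fun x => p x + ∑ i, β i * L' i x) :=
        sublinear_add_sum hp β L'
      have hqY : ∀ x, (∀ i, (δ i • L' i) x = 0) → 0 ≤ p x + ∑ i, β i * L' i x := by
        intro x hx
        have hxY : x ∈ Y := (memY x).2 (fun i => by simpa using hx i)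
        exact hβ ⟨x, hxY⟩
      obtain ⟨c, hc⟩ := lemA m X _ (fun i => δ i • L' i) hqsub hqY
      set R : ℝ := ∑ i, |c i| with hR
      have hR0 : 0 ≤ R := Finset.sum_nonneg (fun i _ => abs_nonneg _)
      have hRc : ∀ i, -c i ≤ R := by
        intro i
        calc -c i ≤ |c i| := neg_le_abs _
        _ ≤ R := Finset.single_le_sum (fun j _ => abs_nonneg (c j)) (Finset.mem_univ i)
      refine ⟨Fin.cases R (fun i => β i + c i * δ i + R * δ i), ?_, ?_⟩
      · intro i
        refine Fin.cases ?_ ?_ i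
        · exact hR0
        · intro j
          show 0 ≤ β j + c j * δ j + R * δ j
          have h1 := hβ0 j
          have h2 := hδ0 j
          have h3 := hRc j
          nlinarith
      · intro x
        rw [Fin.sum_univ_succ]
        simp only [Fin.cases_zero, Fin.cases_succ]
        have e1 : ∑ i, (β i + c i * δ i + R * δ i) * L' i x
            = ∑ i, β i * L' i x + ∑ i, c i * (δ i * L' i x) + R * ∑ i, δ i * L' i x := by
          rw [Finset.mul_sum, ← Finset.sum_add_distrib, ← Finset.sum_add_distrib]
          apply Finset.sum_congr rfl
          intros; ring
        have e2 := hzero x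
        have e3 := hc x
        simp only [LinearMap.smul_apply, smul_eq_mul] at e3
        have e4 : (L 0) x + ∑ i, δ i * L' i x = 0 := e2
        have e5 : R * (L 0) x + R * ∑ i, δ i * L' i x = 0 := by
          rw [← mul_add, e4, mul_zero]
        rw [e1]
        linarith


theorem stmt7 (X : Type*) [AddCommGroup X] [Module ℝ X]
    (N : ℕ) (p : X → ℝ) (P : Fin N → X → ℝ)
    (hp : IsSublinear p)
    (hP : ∀ k, IsSublinear (P k) ∧ IsPolyhedral (P k))
    (h : (⋂ k, {x : X | P k x ≤ 0}) ⊆ {x : X | 0 ≤ p x}) :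
    ∃ α : Fin N → ℝ, (∀ k, 0 ≤ α k) ∧
      ∀ x : X, 0 ≤ p x + ∑ k, α k * P k x := by
  choose mk Lk hLk using fun k => (hP k).2
  set ι := (k : Fin N) × Fin (mk k + 1) with hι
  set F : ι → X →ₗ[ℝ] ℝ := fun s => Lk s.1 s.2 with hF
  set e : Fin (Fintype.card ι) ≃ ι := (Fintype.equivFin ι).symm with he
  have hPle : ∀ k x, ∀ i, Lk k i x ≤ P k x := by
    intro k x i
    rw [hLk k x]
    exact le_ciSup (f := fun i => (Lk k i) x) (Set.Finite.bddAbove (Set.finite_range _)) i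
  have hyp : ∀ x, (∀ j, (F (e j)) x ≤ 0) → 0 ≤ p x := by
    intro x hx
    apply h
    rw [Set.mem_iInter]
    intro k
    show P k x ≤ 0
    rw [hLk k x]
    apply ciSup_le
    intro i
    have key : F (e (e.symm ⟨k, i⟩)) x = Lk k i x := by
      rw [e.apply_symm_apply]
    calc Lk k i x = F (e (e.symm ⟨k, i⟩)) x := key.symm
    _ ≤ 0 := hx _
  obtain ⟨β, hβ0, hβ⟩ := lemB (Fintype.card ι) X p (fun j => F (e j)) hp hyp
  refine ⟨fun k => ∑ i, β (e.symm ⟨k, i⟩), ?_, ?_⟩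
  · intro k
    exact Finset.sum_nonneg (fun i _ => hβ0 _)
  · intro x
    have hb := hβ x
    have hsum1 : ∑ j, β j * (F (e j)) x = ∑ s : ι, β (e.symm s) * (F s) x := by
      rw [← Equiv.sum_comp e (fun s => β (e.symm s) * (F s) x)]
      apply Finset.sum_congr rfl
      intro j _
      rw [e.symm_apply_apply]
    have hsum2 : ∑ s : ι, β (e.symm s) * (F s) x
        = ∑ k, ∑ i, β (e.symm ⟨k, i⟩) * Lk k i x := by
      rw [← Finset.univ_sigma_univ, Finset.sum_sigma]
    have hle : ∀ k, ∑ i, β (e.symm ⟨k, i⟩) * Lk k i x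
        ≤ (∑ i, β (e.symm ⟨k, i⟩)) * P k x := by
      intro k
      rw [Finset.sum_mul]
      apply Finset.sum_le_sum
      intro i _
      exact mul_le_mul_of_nonneg_left (hPle k x i) (hβ0 _)
    have hfinal : ∑ k, ∑ i, β (e.symm ⟨k, i⟩) * Lk k i x
        ≤ ∑ k, (∑ i, β (e.symm ⟨k, i⟩)) * P k x :=
      Finset.sum_le_sum (fun k _ => hle k)
    rw [hsum1, hsum2] at hb
    linarith
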